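/- Let Φ be one of 𝒪, Γ and let X be a normal topological space. The following are equivalent, where 0̄ denotes the constant zero function on X: (a) C*_p(X) satisfies the selection principle S₁(Φ̃↑, 𝒫); (b) X possesses the covering property S₁(Φ^sh,𝒪); (c) C*_p(X) satisfies S₁(Φ_0̄,𝒪_0̄); (d) C*_p(X) satisfies S₁(Φ̃↑,𝒪_0̄). If X possesses property (ε), the equivalences hold also for Φ = Ω. -/

import Mathlib

open Set Filter Topology

namespace Selectors

variable {X : Type*}

/-- Kinds of covers / of pointwise properties: `o` (ordinary covers / 𝒪),
`omega` (ω-covers / Ω), `gamma` (γ-covers / Γ). -/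
inductive CoverKind : Type
  | o | omega | gamma

/-- `f` is a bounded upper semicontinuous real function on `X`. -/
def IsUSCb [TopologicalSpace X] (f : X → ℝ) : Prop :=
  (∀ a : ℝ, IsOpen {x | f x < a}) ∧ ∃ M : ℝ, ∀ x, |f x| ≤ M

/-- `USC*_p(X)`: the set of bounded upper semicontinuous real functions on `X`,
regarded as a subset of `X → ℝ` with the product (pointwise convergence) topology. -/
def USCb (X : Type*) [TopologicalSpace X] : Set (X → ℝ) := {f | IsUSCb f}

/-- `C*_p(X)`: the set of bounded continuous real functions on `X`. -/
def Cb (X : Type*) [TopologicalSpace X] : Set (X → ℝ) :=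
  {f | Continuous f ∧ ∃ M : ℝ, ∀ x, |f x| ≤ M}

/-- `𝒰` is a cover of `X`. -/
def IsCover (𝒰 : Set (Set X)) : Prop := ∀ x : X, ∃ U ∈ 𝒰, x ∈ U

/-- The (not necessarily open) cover condition of the given kind:
an `o`-cover is a cover; an ω-cover is a cover not containing `X` such that every
finite subset of `X` is contained in a member; a γ-cover is an infinite cover such
that each point belongs to all but finitely many members. -/
def kindSets (k : CoverKind) (𝒰 : Set (Set X)) : Prop :=
  match k with
  | .o => IsCover 𝒰
  | .omega => IsCover 𝒰 ∧ Set.univ ∉ 𝒰 ∧ ∀ F : Set X, F.Finite → ∃ U ∈ 𝒰, F ⊆ U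
  | .gamma => IsCover 𝒰 ∧ 𝒰.Infinite ∧ ∀ x : X, {U ∈ 𝒰 | x ∉ U}.Finite

/-- The family `𝒪(X)`, `Ω(X)` or `Γ(X)` of open covers/ω-covers/γ-covers of `X`. -/
def OpenKindCovers (X : Type*) [TopologicalSpace X] (k : CoverKind) : Set (Set (Set X)) :=
  {𝒰 | (∀ U ∈ 𝒰, IsOpen U) ∧ kindSets k 𝒰}

/-- The selection principle `S₁(A, B)`. -/
def S1 {α : Type*} (A B : Set (Set α)) : Prop :=
  ∀ u : ℕ → Set α, (∀ n, u n ∈ A) →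
    ∃ sel : ℕ → α, (∀ n, sel n ∈ u n) ∧ Set.range sel ∈ B

/-- The selection principle `S_fin(A, B)`. -/
def Sfin {α : Type*} (A B : Set (Set α)) : Prop :=
  ∀ u : ℕ → Set α, (∀ n, u n ∈ A) →
    ∃ V : ℕ → Set α, (∀ n, V n ⊆ u n ∧ (V n).Finite) ∧ (⋃ n, V n) ∈ B

/-- Property `(𝒪_h)` of a family `F` of real functions. -/
def PropO (h : X → ℝ) (F : Set (X → ℝ)) : Prop :=
  ∀ x : X, h x ∈ closure ((fun f : X → ℝ => f x) '' F)

/-- Property `(Ω_h)`: `h ∉ F` and `h` belongs to the closure of `F` in `ℝ^X`. -/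
def PropOmega (h : X → ℝ) (F : Set (X → ℝ)) : Prop :=
  h ∉ F ∧ h ∈ closure F

/-- Property `(Γ_h)`. -/
def PropGamma (h : X → ℝ) (F : Set (X → ℝ)) : Prop :=
  F.Infinite ∧ ∀ ε : ℝ, 0 < ε → ∀ x : X, {f ∈ F | ε ≤ |f x - h x|}.Finite

/-- Property `(Φ_h)` for `Φ = 𝒪, Ω, Γ`. -/
def kindProp (k : CoverKind) (h : X → ℝ) (F : Set (X → ℝ)) : Prop :=
  match k with
  | .o => PropO h F
  | .omega => PropOmega h F
  | .gamma => PropGamma h F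

/-- The family `Φ_h(H) = {F ⊆ H : F has (Φ_h) and ∀ f ∈ F, f ≥ h ∧ f - h ∈ H}`. -/
def PhiH (k : CoverKind) (h : X → ℝ) (H : Set (X → ℝ)) : Set (Set (X → ℝ)) :=
  {F | F ⊆ H ∧ kindProp k h F ∧ ∀ f ∈ F, h ≤ f ∧ f - h ∈ H}

/-- `F ⊆ H` is sequentially dense in `H` (with respect to pointwise convergence). -/
def SeqDenseIn (F H : Set (X → ℝ)) : Prop :=
  F ⊆ H ∧ ∀ f ∈ H, ∃ u : ℕ → (X → ℝ), (∀ n, u n ∈ F) ∧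
    Filter.Tendsto u Filter.atTop (nhds f)

/-- `F ⊆ H` is dense in `H`. -/
def DenseIn (F H : Set (X → ℝ)) : Prop :=
  F ⊆ H ∧ H ⊆ closure F

/-- `F` is pointwise dense: `{f x : f ∈ F}` is dense in `ℝ` for every `x`. -/
def PointwiseDense (F : Set (X → ℝ)) : Prop :=
  ∀ x : X, Dense {y : ℝ | ∃ f ∈ F, f x = y}

/-- `F ⊆ H` is upper sequentially dense in `H`. -/
def UpperSeqDenseIn (F H : Set (X → ℝ)) : Prop :=
  F ⊆ H ∧ ∀ f ∈ H, ∃ u : ℕ → (X → ℝ),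
    (∀ n, u n ∈ F ∧ f ≤ u n ∧ u n - f ∈ H) ∧
    Filter.Tendsto u Filter.atTop (nhds f)

/-- `F ⊆ H` is upper dense in `H`: for every `f ∈ H` the set
`{h ∈ F : h ≥ f ∧ h - f ∈ H}` is dense in `{h ∈ H : h ≥ f}`. -/
def UpperDenseIn (F H : Set (X → ℝ)) : Prop :=
  F ⊆ H ∧ ∀ f ∈ H, {g | g ∈ H ∧ f ≤ g} ⊆ closure {g | g ∈ F ∧ f ≤ g ∧ g - f ∈ H}

/-- `𝒮(H)`: the family of sequentially dense subsets of `H`. -/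
def Sfam (H : Set (X → ℝ)) : Set (Set (X → ℝ)) := {F | SeqDenseIn F H}

/-- `𝒟(H)`: the family of dense subsets of `H`. -/
def Dfam (H : Set (X → ℝ)) : Set (Set (X → ℝ)) := {F | DenseIn F H}

/-- `𝒫(H)`: the family of pointwise dense subsets of `H`. -/
def Pfam (H : Set (X → ℝ)) : Set (Set (X → ℝ)) := {F | F ⊆ H ∧ PointwiseDense F}

/-- `Φ̃↑(H)`: for `Φ = Γ` the upper sequentially dense subsets, for `Φ = Ω`
the upper dense subsets, for `Φ = 𝒪` the pointwise dense subsets of `H`. -/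
def upTilde (k : CoverKind) (H : Set (X → ℝ)) : Set (Set (X → ℝ)) :=
  match k with
  | .o => Pfam H
  | .omega => {F | UpperDenseIn F H}
  | .gamma => {F | UpperSeqDenseIn F H}

/-- `H` is separable: it has a countable dense subset. -/
def SeparableSet (H : Set (X → ℝ)) : Prop := ∃ D, D.Countable ∧ DenseIn D H

/-- `H` is sequentially separable: it has a countable sequentially dense subset. -/
def SeqSeparableSet (H : Set (X → ℝ)) : Prop := ∃ D, D.Countable ∧ SeqDenseIn D H

/-- Property `(ε)`: every open ω-cover contains a countable ω-subcover. -/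
def PropEps (X : Type*) [TopologicalSpace X] : Prop :=
  ∀ 𝒰 : Set (Set X), 𝒰 ∈ OpenKindCovers X CoverKind.omega →
    ∃ 𝒱 ⊆ 𝒰, 𝒱.Countable ∧ 𝒱 ∈ OpenKindCovers X CoverKind.omega

/-- `S` is an `F_σ` set with respect to the topology `t`. -/
def IsFsigmaIn (t : TopologicalSpace X) (S : Set X) : Prop :=
  ∃ C : ℕ → Set X, (∀ n, IsClosed[t] (C n)) ∧ S = ⋃ n, C n

/-- `S` is locally closed with respect to `t`: an intersection of a `t`-open
and a `t`-closed set. -/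
def IsLocallyClosedIn (t : TopologicalSpace X) (S : Set X) : Prop :=
  ∃ U F : Set X, IsOpen[t] U ∧ IsClosed[t] F ∧ S = U ∩ F

/-- `S` is a cozero set with respect to `t`. -/
def IsCozeroIn (t : TopologicalSpace X) (S : Set X) : Prop :=
  ∃ f : X → ℝ, @Continuous X ℝ t inferInstance f ∧ S = {x | f x ≠ 0}

/-- The `OB`-property of `⟨X, t⟩`: there is a separable metrizable topology `t'`
on `X` weaker than `t` such that every locally closed subset of `⟨X, t⟩` is an
`F_σ`-set in `t'`. -/
def OBProperty (X : Type*) [t : TopologicalSpace X] : Prop :=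
  ∃ t' : TopologicalSpace X,
    (∀ s : Set X, IsOpen[t'] s → IsOpen[t] s) ∧
    @TopologicalSpace.MetrizableSpace X t' ∧
    @TopologicalSpace.SeparableSpace X t' ∧
    ∀ S : Set X, IsLocallyClosedIn t S → IsFsigmaIn t' S

/-- The `V`-property of `⟨X, t⟩`: there is a separable metrizable topology `t'`
on `X` weaker than `t` such that every cozero subset of `⟨X, t⟩` is an
`F_σ`-set in `t'`. -/
def VProperty (X : Type*) [t : TopologicalSpace X] : Prop :=
  ∃ t' : TopologicalSpace X,
    (∀ s : Set X, IsOpen[t'] s → IsOpen[t] s) ∧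
    @TopologicalSpace.MetrizableSpace X t' ∧
    @TopologicalSpace.SeparableSpace X t' ∧
    ∀ S : Set X, IsCozeroIn t S → IsFsigmaIn t' S

/-- `iw(X) = ℵ₀`: `X` can be mapped by a one-to-one continuous map onto a
Tychonoff space of countable weight. -/
def IWCountable (X : Type*) [TopologicalSpace X] : Prop :=
  ∃ (Y : Type) (tY : TopologicalSpace Y) (f : X → Y),
    @Continuous X Y _ tY f ∧ Function.Bijective f ∧
    @T35Space Y tY ∧ @SecondCountableTopology Y tY

/-- `Φ^sh(X)`: the family of open shrinkable φ-covers of `X`. -/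
def ShFam (X : Type*) [TopologicalSpace X] (k : CoverKind) : Set (Set (Set X)) :=
  {𝒰 | 𝒰 ∈ OpenKindCovers X k ∧
    ∃ 𝒲 ∈ OpenKindCovers X k, ∀ W ∈ 𝒲, ∃ U ∈ 𝒰, closure W ⊆ U}

/-- A zero set. -/
def IsZeroSet [TopologicalSpace X] (S : Set X) : Prop :=
  ∃ f : X → ℝ, Continuous f ∧ S = {x | f x = 0}

/-- A cozero set. -/
def IsCozeroSet [TopologicalSpace X] (S : Set X) : Prop :=
  ∃ f : X → ℝ, Continuous f ∧ S = {x | f x ≠ 0}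

/-- `Φ^fsh_cz(X)`: the family of functionally shrinkable φ-covers of `X`
consisting of cozero sets. -/
def FshCzFam (X : Type*) [TopologicalSpace X] (k : CoverKind) : Set (Set (Set X)) :=
  {𝒰 | (∀ U ∈ 𝒰, IsCozeroSet U) ∧ kindSets k 𝒰 ∧
    ∃ 𝒲 : Set (Set X), (∀ W ∈ 𝒲, IsZeroSet W) ∧ kindSets k 𝒲 ∧
      ∀ W ∈ 𝒲, ∃ U ∈ 𝒰, closure W ⊆ U}

/-- The function `f_{U,g}`: equal to `0` on `U` and to `1 + sup |g|` off `U`. -/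
noncomputable def fU (U : Set X) (g : X → ℝ) : X → ℝ :=
  Uᶜ.indicator fun _ => 1 + ⨆ y, |g y|

/-- The family `S(𝒰) = {f_{U,g} + g : U ∈ 𝒰, g ∈ USC*_p(X)}`. -/
def SU [TopologicalSpace X] (𝒰 : Set (Set X)) : Set (X → ℝ) :=
  {f | ∃ U ∈ 𝒰, ∃ g ∈ USCb X, f = fU U g + g}

/-- The Sorgenfrey topology on `ℝ`, generated by the half-open intervals `[a, b)`. -/
def sorgenfreyTop : TopologicalSpace ℝ :=
  TopologicalSpace.generateFrom {s | ∃ a b : ℝ, s = Set.Ico a b}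

/-- The Sorgenfrey plane topology on `ℝ × ℝ`. -/
def sorgenfreyPlaneTop : TopologicalSpace (ℝ × ℝ) :=
  @instTopologicalSpaceProd ℝ ℝ sorgenfreyTop sorgenfreyTop


set_option linter.unusedSectionVars false
section Helpers

variable [TopologicalSpace X]

lemma cb_sub {f g : X → ℝ} (hf : f ∈ Cb X) (hg : g ∈ Cb X) : f - g ∈ Cb X := by
  obtain ⟨cf, Mf, hMf⟩ := hf
  obtain ⟨cg, Mg, hMg⟩ := hg
  exact ⟨cf.sub cg, Mf + Mg, fun x => by
    simpa using (abs_sub _ _).trans (add_le_add (hMf x) (hMg x))⟩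

lemma cb_const (c : ℝ) : (fun _ : X => c) ∈ Cb X :=
  ⟨continuous_const, |c|, fun _ => le_rfl⟩

lemma cb_zero : (0 : X → ℝ) ∈ Cb X := cb_const 0

lemma propO_iff {F : Set (X → ℝ)} :
    PropO (0 : X → ℝ) F ↔ ∀ x : X, ∀ ε > 0, ∃ f ∈ F, |f x| < ε := by
  unfold PropO
  constructor
  · intro h x ε hε
    obtain ⟨y, ⟨f, hf, rfl⟩, hy⟩ := (Real.mem_closure_iff).1 (by simpa using h x) ε hε
    exact ⟨f, hf, by simpa using hy⟩
  · intro h x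
    have : (0:ℝ) ∈ closure ((fun f : X → ℝ => f x) '' F) := by
      rw [Real.mem_closure_iff]
      intro ε hε
      obtain ⟨f, hf, h2⟩ := h x ε hε
      exact ⟨f x, ⟨f, hf, rfl⟩, by simpa using h2⟩
    simpa using this

lemma urysohn [NormalSpace X] {A U : Set X} (hA : IsClosed A) (hU : IsOpen U) (hAU : A ⊆ U) :
    ∃ h : X → ℝ, Continuous h ∧ (∀ x ∈ A, h x = 0) ∧ (∀ x ∉ U, h x = 1) ∧
      ∀ x, h x ∈ Icc (0:ℝ) 1 := by
  obtain ⟨f, h0, h1, hicc⟩ := exists_continuous_zero_one_of_isClosed hA hU.isClosed_compl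
    (Set.disjoint_left.2 fun x hx hxc => hxc (hAU hx))
  exact ⟨f, f.continuous, fun x hx => by simpa using h0 hx, fun x hx => by simpa using h1 hx, hicc⟩

lemma exists_infinite_fiber' {α β : Type*} {F : Set α} (hF : F.Infinite) (φ : α → β)
    (hfin : (φ '' F).Finite) : ∃ b ∈ φ '' F, {a ∈ F | φ a = b}.Infinite := by
  by_contra h
  push_neg at h
  have hsub : F ⊆ ⋃ b ∈ φ '' F, {a ∈ F | φ a = b} := fun a ha =>
    Set.mem_biUnion (Set.mem_image_of_mem φ ha) ⟨ha, rfl⟩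
  exact hF ((hfin.biUnion (fun b hb => h b hb)).subset hsub)

lemma finite_of_eventually {p : ℕ → Prop} (h : ∀ᶠ n in Filter.atTop, p n) :
    {n | ¬ p n}.Finite := by
  obtain ⟨N, hN⟩ := Filter.eventually_atTop.1 h
  refine (Set.finite_Iio N).subset fun n hn => ?_
  by_contra hlt
  exact hn (hN n (not_lt.1 (by simpa [Set.mem_Iio] using hlt)))

end Helpers
section SSsec

variable [TopologicalSpace X]

/-- The decoding family used to pass from covers to function families. -/
def SS (X : Type*) [TopologicalSpace X] (𝒰 : Set (Set X)) : Set (X → ℝ) :=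
  {g | g ∈ Cb X ∧ ∃ U ∈ 𝒰, ∀ x ∉ U, 1 ≤ |g x|}

lemma SS_aux [NormalSpace X] {𝒰 : Set (Set X)} {U A : Set X} (hUU : U ∈ 𝒰)
    (hU : IsOpen U) (hA : IsClosed A) (hAU : A ⊆ U)
    {g : X → ℝ} (hg : g ∈ Cb X) :
    ∃ g' : X → ℝ, g' ∈ SS X 𝒰 ∧ g ≤ g' ∧ (∀ x ∈ A, g' x = g x) ∧ g' - g ∈ Cb X := by
  obtain ⟨cg, M, hM⟩ := hg
  obtain ⟨h, hc, h0, h1, hicc⟩ := urysohn hA hU hAU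
  set c : ℝ := 1 + |M| with hcdef
  have hc0 : (0:ℝ) ≤ c := by positivity
  refine ⟨fun x => g x + c * h x, ⟨⟨⟨by continuity, |M| + c, fun x => ?_⟩, U, hUU, fun x hx => ?_⟩,
    fun x => ?_, fun x hx => ?_, ?_⟩⟩
  · show |g x + c * h x| ≤ |M| + c
    have h1' := (hicc x).1; have h2' := (hicc x).2
    have habs : |g x + c * h x| ≤ |g x| + |c * h x| := abs_add_le _ _
    have hch : |c * h x| ≤ c := by
      rw [abs_of_nonneg (mul_nonneg hc0 h1')]; nlinarith
    linarith [hM x, le_abs_self M]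
  · show (1:ℝ) ≤ |g x + c * h x|
    rw [h1 x hx]
    have hgx : -|M| ≤ g x := by
      have := (abs_le.1 ((hM x).trans (le_abs_self M))).1; linarith
    have hineq : (1:ℝ) ≤ g x + c * 1 := by simp only [hcdef, mul_one]; linarith
    exact hineq.trans (le_abs_self _)
  · show g x ≤ g x + c * h x
    nlinarith [(hicc x).1]
  · show g x + c * h x = g x
    rw [h0 x hx]; ring
  · have heq : (fun x => g x + c * h x) - g = fun x => c * h x := by
      funext x; simp only [Pi.sub_apply]; ring
    rw [heq]
    exact ⟨by continuity, c, fun x => by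
      rw [abs_of_nonneg (mul_nonneg hc0 (hicc x).1)]; nlinarith [(hicc x).2]⟩

end SSsec
section SS2

variable [TopologicalSpace X]

lemma SS_mem_upTilde [T2Space X] [NormalSpace X] {Φ : CoverKind} {𝒰 : Set (Set X)}
    (h𝒰 : 𝒰 ∈ ShFam X Φ) : SS X 𝒰 ∈ upTilde Φ (Cb X) := by
  obtain ⟨⟨hopen, hkind⟩, 𝒲, ⟨hWopen, hWkind⟩, hshrink⟩ := h𝒰
  have hsub : SS X 𝒰 ⊆ Cb X := fun g hg => hg.1
  cases Φ with
  | o =>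
    refine ⟨hsub, fun x => ?_⟩
    have huniv : {y : ℝ | ∃ f ∈ SS X 𝒰, f x = y} = Set.univ := by
      refine Set.eq_univ_of_forall fun r => ?_
      obtain ⟨U, hUU, hxU⟩ := hkind x
      obtain ⟨g', hg', _, hgA, _⟩ := SS_aux hUU (hopen U hUU) (isClosed_singleton (x := x))
        (Set.singleton_subset_iff.2 hxU) (cb_const r)
      exact ⟨g', hg', hgA x rfl⟩
    rw [huniv]; exact dense_univ
  | gamma =>
    obtain ⟨hWcover, hWinf, hWgamma⟩ := hWkind
    refine ⟨hsub, fun f hf => ?_⟩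
    set e := hWinf.natEmbedding with he
    have heW : ∀ k : ℕ, (e k : Set X) ∈ 𝒲 := fun k => (e k).2
    have hk : ∀ k : ℕ, ∃ U ∈ 𝒰, closure (e k : Set X) ⊆ U := fun k => hshrink _ (heW k)
    choose U hUU hcl using hk
    have haux : ∀ k : ℕ, ∃ g', g' ∈ SS X 𝒰 ∧ f ≤ g' ∧ (∀ x ∈ closure (e k : Set X), g' x = f x)
        ∧ g' - f ∈ Cb X := fun k =>
      SS_aux (hUU k) (hopen _ (hUU k)) isClosed_closure (hcl k) hf
    choose u hu1 hu2 hu3 hu4 using haux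
    refine ⟨u, fun k => ⟨hu1 k, hu2 k, hu4 k⟩, ?_⟩
    rw [tendsto_pi_nhds]
    intro x
    have hfin : {k : ℕ | x ∉ (e k : Set X)}.Finite := by
      have hsub2 : {k : ℕ | x ∉ (e k : Set X)} ⊆ (fun k => (e k : Set X)) ⁻¹' {W ∈ 𝒲 | x ∉ W} :=
        fun k hk' => ⟨heW k, hk'⟩
      refine Set.Finite.subset (Set.Finite.preimage ?_ (hWgamma x)) hsub2
      exact (Subtype.coe_injective.comp e.injective).injOn
    have hev : ∀ᶠ k in Filter.atTop, x ∈ (e k : Set X) := by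
      rw [← Nat.cofinite_eq_atTop]
      exact Filter.mem_cofinite.2 (by simpa [Set.compl_setOf] using hfin)
    refine Filter.Tendsto.congr' ?_ (tendsto_const_nhds (α := ℕ) (x := f x) (f := Filter.atTop))
    exact hev.mono fun k hk' => (hu3 k x (subset_closure hk')).symm
  | omega =>
    obtain ⟨hWcover, hWuniv, hWfin⟩ := hWkind
    refine ⟨hsub, fun f hf g hg => ?_⟩
    rw [mem_closure_iff_nhds]
    intro s hs
    rw [nhds_pi] at hs
    obtain ⟨I, hIfin, t, ht, hsub'⟩ := Filter.mem_pi.1 hs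
    obtain ⟨W, hWW, hIW⟩ := hWfin I hIfin
    obtain ⟨U, hUU, hclW⟩ := hshrink W hWW
    obtain ⟨g', hg'SS, hgg', hg'eq, _⟩ := SS_aux hUU (hopen U hUU) isClosed_closure hclW hg.1
    refine ⟨g', ⟨hsub' ?_, hg'SS, le_trans hg.2 hgg', cb_sub (hsub hg'SS) hf⟩⟩
    intro i hi
    rw [hg'eq i (subset_closure (hIW hi))]
    exact mem_of_mem_nhds (ht i)

lemma imp42 [T2Space X] [NormalSpace X] {Φ : CoverKind}
    (h4 : S1 (upTilde Φ (Cb X)) {F | PropO (0 : X → ℝ) F}) :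
    S1 (ShFam X Φ) (OpenKindCovers X CoverKind.o) := by
  intro u hu
  obtain ⟨f, hf, hrange⟩ := h4 (fun n => SS X (u n)) (fun n => SS_mem_upTilde (hu n))
  have hdec : ∀ n, ∃ U ∈ u n, ∀ x ∉ U, 1 ≤ |f n x| := fun n => (hf n).2
  choose U hUU hUprop using hdec
  refine ⟨U, hUU, ⟨fun V hV => ?_, fun x => ?_⟩⟩
  · obtain ⟨n, rfl⟩ := hV
    exact ((hu n).1).1 _ (hUU n)
  · obtain ⟨g, hgmem, hg⟩ := propO_iff.1 hrange x 1 one_pos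
    obtain ⟨n, rfl⟩ := hgmem
    exact ⟨U n, ⟨n, rfl⟩, by by_contra hx; exact absurd (hUprop n x hx) (not_le.2 hg)⟩

end SS2
section Imp23

variable [TopologicalSpace X]

lemma phiH_nonempty [Nonempty X] {Φ : CoverKind} {F : Set (X → ℝ)}
    (hF : F ∈ PhiH Φ (0 : X → ℝ) (Cb X)) : F.Nonempty := by
  obtain ⟨hsub, hkind, hge⟩ := hF
  cases Φ with
  | o =>
    obtain ⟨f, hf, _⟩ := propO_iff.1 hkind (Classical.arbitrary X) 1 one_pos
    exact ⟨f, hf⟩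
  | omega =>
    rcases Set.eq_empty_or_nonempty F with rfl | h
    · simpa [closure_empty] using hkind.2
    · exact h
  | gamma => exact hkind.1.nonempty

lemma cover_of_phiH {Φ : CoverKind} {G : Set (X → ℝ)} {ε : ℝ} (hεpos : 0 < ε)
    (hG : G ∈ PhiH Φ (0 : X → ℝ) (Cb X))
    (hnd : ¬ ∃ f ∈ G, ∀ x, f x < ε) :
    (fun f : X → ℝ => {x | f x < ε}) '' G ∈ ShFam X Φ := by
  obtain ⟨hsub, hkind, hge⟩ := hG
  have hopen : ∀ δ : ℝ, ∀ V ∈ (fun f : X → ℝ => {x | f x < δ}) '' G, IsOpen V := by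
    rintro δ V ⟨f, hf, rfl⟩
    exact isOpen_lt (hsub hf).1 continuous_const
  have hnuniv : ∀ δ : ℝ, δ ≤ ε → ∀ f ∈ G, {x | f x < δ} ≠ Set.univ := by
    intro δ hδ f hf heq
    refine hnd ⟨f, hf, fun x => ?_⟩
    have : x ∈ {x | f x < δ} := heq ▸ Set.mem_univ x
    exact lt_of_lt_of_le this hδ
  have hshrink : ∀ W ∈ (fun f : X → ℝ => {x | f x < ε/2}) '' G,
      ∃ U ∈ (fun f : X → ℝ => {x | f x < ε}) '' G, closure W ⊆ U := by
    rintro W ⟨f, hf, rfl⟩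
    refine ⟨{x | f x < ε}, ⟨f, hf, rfl⟩, ?_⟩
    have h1 : closure {x | f x < ε/2} ⊆ {x | f x ≤ ε/2} :=
      closure_minimal (fun x hx => show f x ≤ ε/2 from le_of_lt hx) (isClosed_le (hsub hf).1 continuous_const)
    exact h1.trans (fun x hx => show f x < ε from lt_of_le_of_lt hx (half_lt_self hεpos))
  have hkinds : ∀ δ : ℝ, 0 < δ → δ ≤ ε → kindSets Φ ((fun f : X → ℝ => {x | f x < δ}) '' G) := by
    intro δ hδ0 hδε
    cases Φ with
    | o =>
      intro x
      obtain ⟨f, hf, hfx⟩ := propO_iff.1 hkind x δ hδ0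
      exact ⟨{x | f x < δ}, ⟨f, hf, rfl⟩, lt_of_le_of_lt (le_abs_self _) hfx⟩
    | omega =>
      obtain ⟨h0F, h0cl⟩ := hkind
      have hfins : ∀ I : Set X, I.Finite →
          ∃ U ∈ (fun f : X → ℝ => {x | f x < δ}) '' G, I ⊆ U := by
        intro I hI
        have hN : (Set.pi I (fun _ => Set.Iio δ)) ∈ 𝓝 (0 : X → ℝ) := by
          rw [nhds_pi]
          exact Filter.mem_pi.2 ⟨I, hI, (fun _ => Set.Iio δ),
            fun i => by simpa using Iio_mem_nhds hδ0, subset_rfl⟩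
        obtain ⟨f, hfN, hfF⟩ := mem_closure_iff_nhds.1 h0cl _ hN
        exact ⟨{x | f x < δ}, ⟨f, hfF, rfl⟩, fun x hx => hfN x hx⟩
      refine ⟨fun x => ?_, fun hu => ?_, hfins⟩
      · obtain ⟨U, hU, hxU⟩ := hfins {x} (Set.finite_singleton x)
        exact ⟨U, hU, hxU rfl⟩
      · obtain ⟨f, hf, heq⟩ := hu
        exact hnuniv δ hδε f hf heq
    | gamma =>
      obtain ⟨hGinf, hγ⟩ := hkind
      have hfib : ∀ x, {f ∈ G | ¬ f x < δ}.Finite := by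
        intro x
        refine (hγ δ hδ0 x).subset fun f hf => ⟨hf.1, ?_⟩
        have h0f : (0:ℝ) ≤ f x := by
          have := (hge f hf.1).1 x; simpa using this
        simp only [Pi.zero_apply, sub_zero]
        rw [abs_of_nonneg h0f]; exact not_lt.1 hf.2
      refine ⟨fun x => ?_, fun hfin => ?_, fun x => ?_⟩
      · obtain ⟨f, hfmem⟩ := (hGinf.diff (hfib x)).nonempty
        have hfG : f ∈ G := hfmem.1
        have : f x < δ := by
          by_contra hlt
          exact hfmem.2 ⟨hfG, hlt⟩
        exact ⟨{x | f x < δ}, ⟨f, hfG, rfl⟩, this⟩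
      · obtain ⟨V, hV, hfibinf⟩ := exists_infinite_fiber' hGinf _ hfin
        obtain ⟨f₀, hf₀, rfl⟩ := hV
        obtain ⟨x, hx⟩ := Set.ne_univ_iff_exists_notMem _ |>.1 (hnuniv δ hδε f₀ hf₀)
        refine hfibinf ((hfib x).subset ?_)
        rintro f ⟨hfG, heq⟩
        refine ⟨hfG, fun hlt => hx ?_⟩
        have : x ∈ {y | f y < δ} := hlt
        rwa [heq] at this
      · refine ((hfib x).image (fun f : X → ℝ => {x | f x < δ})).subset ?_
        rintro V ⟨⟨f, hfG, rfl⟩, hxV⟩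
        exact ⟨f, ⟨hfG, hxV⟩, rfl⟩
  exact ⟨⟨hopen ε, hkinds ε hεpos le_rfl⟩, (fun f : X → ℝ => {x | f x < ε/2}) '' G,
    ⟨hopen (ε/2), hkinds (ε/2) (by linarith) (by linarith)⟩, hshrink⟩

lemma imp23 [T2Space X] [NormalSpace X] [Infinite X] {Φ : CoverKind}
    (h2 : S1 (ShFam X Φ) (OpenKindCovers X CoverKind.o)) :
    S1 (PhiH Φ (0 : X → ℝ) (Cb X)) (PhiH CoverKind.o (0 : X → ℝ) (Cb X)) := by
  intro F hF
  have hne : ∀ n, (F n).Nonempty := fun n => phiH_nonempty (hF n)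
  have key : ∀ k : ℕ, ∃ s : ℕ → (X → ℝ), (∀ m, s m ∈ F (Nat.pair k m)) ∧
      ∀ x, ∃ m, s m x < 1 / (k + 1 : ℝ) := by
    intro k
    set ε : ℝ := 1 / (k + 1 : ℝ) with hε
    have hεpos : 0 < ε := by positivity
    by_cases hdeg : ∃ m, ∃ f ∈ F (Nat.pair k m), ∀ x, f x < ε
    · obtain ⟨m₀, f₀, hf₀, hsmall⟩ := hdeg
      refine ⟨fun m => if h : m = m₀ then f₀ else (hne (Nat.pair k m)).some,
        fun m => ?_, fun x => ?_⟩
      · by_cases h : m = m₀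
        · subst h; simp [hf₀]
        · simp [h, (hne (Nat.pair k m)).some_mem]
      · exact ⟨m₀, by simpa using hsmall x⟩
    · push_neg at hdeg
      have hcov : ∀ m, (fun f : X → ℝ => {x | f x < ε}) '' F (Nat.pair k m) ∈ ShFam X Φ := by
        intro m
        refine cover_of_phiH hεpos (hF _) ?_
        rintro ⟨f, hf, hall⟩
        obtain ⟨x, hx⟩ := hdeg m f hf
        exact absurd (hall x) (not_lt.2 hx)
      obtain ⟨V, hV, hVcov⟩ := h2 _ hcov
      have hdec : ∀ m, ∃ f ∈ F (Nat.pair k m), {x | f x < ε} = V m := fun m => hV m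
      choose s hs hseq using hdec
      refine ⟨s, hs, fun x => ?_⟩
      obtain ⟨Vm, ⟨m, rfl⟩, hxV⟩ := hVcov.2 x
      refine ⟨m, ?_⟩
      rw [← hseq m] at hxV
      exact hxV
  choose s hs1 hs2 using key
  set sel : ℕ → (X → ℝ) := fun n => s (Nat.unpair n).1 (Nat.unpair n).2 with hseldef
  have hsel : ∀ n, sel n ∈ F n := by
    intro n
    have := hs1 (Nat.unpair n).1 (Nat.unpair n).2
    rwa [Nat.pair_unpair] at this
  refine ⟨sel, hsel, ?_, ?_, ?_⟩
  · rintro g ⟨n, rfl⟩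
    exact (hF n).1 (hsel n)
  · refine propO_iff.2 fun x ε hε => ?_
    obtain ⟨k, hk⟩ := exists_nat_one_div_lt hε
    obtain ⟨m, hm⟩ := hs2 k x
    refine ⟨sel (Nat.pair k m), ⟨Nat.pair k m, rfl⟩, ?_⟩
    have hval : sel (Nat.pair k m) = s k m := by
      simp [hseldef, Nat.unpair_pair]
    have h0 : (0:ℝ) ≤ s k m x := by
      have := ((hF (Nat.pair k m)).2.2 _ (hs1 k m)).1 x
      simpa using this
    rw [hval, abs_of_nonneg h0]
    calc s k m x < 1 / (k + 1 : ℝ) := hm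
      _ < ε := by exact_mod_cast hk
  · rintro g ⟨n, rfl⟩
    exact (hF n).2.2 _ (hsel n)

end Imp23
section Imp31

variable [TopologicalSpace X]

lemma upTilde_subset {Φ : CoverKind} {T : Set (X → ℝ)} (hT : T ∈ upTilde Φ (Cb X)) :
    T ⊆ Cb X := by
  cases Φ with
  | o => exact hT.1
  | omega => exact hT.1
  | gamma => exact hT.1

lemma upTilde_nonempty [Nonempty X] {Φ : CoverKind} {T : Set (X → ℝ)}
    (hT : T ∈ upTilde Φ (Cb X)) : T.Nonempty := by
  cases Φ with
  | o =>
    obtain ⟨y, f, hf, -⟩ := (hT.2 (Classical.arbitrary X)).nonempty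
    exact ⟨f, hf⟩
  | omega =>
    have h0 : (0 : X → ℝ) ∈ closure {g | g ∈ T ∧ (0:X→ℝ) ≤ g ∧ g - 0 ∈ Cb X} :=
      hT.2 0 cb_zero ⟨cb_zero, le_rfl⟩
    have := closure_nonempty_iff.1 ⟨_, h0⟩
    exact this.mono (fun g hg => hg.1) |>.imp (fun _ h => h) |>.elim (fun g hg => ⟨g, hg⟩)
  | gamma =>
    obtain ⟨u, hu, -⟩ := hT.2 0 cb_zero
    exact ⟨u 0, (hu 0).1⟩

lemma key31 [Nonempty X] {Φ : CoverKind}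
    (h3 : S1 (PhiH Φ (0 : X → ℝ) (Cb X)) (PhiH CoverKind.o (0 : X → ℝ) (Cb X)))
    (q : ℝ) (T : ℕ → Set (X → ℝ)) (hT : ∀ m, T m ∈ upTilde Φ (Cb X)) :
    ∃ sel : ℕ → (X → ℝ), (∀ m, sel m ∈ T m) ∧
      ∀ x : X, ∀ ε > 0, ∃ m, |sel m x - q| < ε := by
  set cq : X → ℝ := fun _ => q with hcq
  cases Φ with
  | o =>
    set Fm : ℕ → Set (X → ℝ) := fun m => (fun f : X → ℝ => (fun x => |f x - q|)) '' T m with hFmdef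
    have hFm : ∀ m, Fm m ∈ PhiH CoverKind.o 0 (Cb X) := by
      intro m
      refine ⟨?_, ?_, ?_⟩
      · rintro g ⟨f, hf, rfl⟩
        obtain ⟨hc, M, hM⟩ := (hT m).1 hf
        exact ⟨(hc.sub continuous_const).abs, M + |q|, fun x => by
          rw [abs_abs]
          calc |f x - q| ≤ |f x| + |q| := abs_sub _ _
            _ ≤ M + |q| := by linarith [hM x]⟩
      · refine propO_iff.2 fun x ε hε => ?_
        have hdense := (hT m).2 x
        obtain ⟨y, hyball, hymem⟩ := Metric.dense_iff.1 hdense q ε hε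
        obtain ⟨f, hf, rfl⟩ := hymem
        refine ⟨fun x => |f x - q|, ⟨f, hf, rfl⟩, ?_⟩
        rw [abs_abs]
        simpa [Real.dist_eq] using hyball
      · rintro g ⟨f, hf, rfl⟩
        refine ⟨fun x => abs_nonneg _, ?_⟩
        rw [sub_zero]
        obtain ⟨hc, M, hM⟩ := (hT m).1 hf
        exact ⟨(hc.sub continuous_const).abs, M + |q|, fun x => by
          rw [abs_abs]
          calc |f x - q| ≤ |f x| + |q| := abs_sub _ _
            _ ≤ M + |q| := by linarith [hM x]⟩
    obtain ⟨g, hg, hrange⟩ := h3 Fm hFm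
    choose f hfT hfeq using fun m => hg m
    refine ⟨f, hfT, fun x ε hε => ?_⟩
    obtain ⟨gm, ⟨m, rfl⟩, hlt⟩ := propO_iff.1 hrange.2.1 x ε hε
    refine ⟨m, ?_⟩
    have := congrFun (hfeq m) x
    rw [← this] at hlt
    simpa [abs_abs] using hlt
  | gamma =>
    by_cases hq : ∃ m, cq ∈ T m
    · obtain ⟨m₀, hm₀⟩ := hq
      refine ⟨fun m => if h : m = m₀ then cq else (upTilde_nonempty (hT m)).some,
        fun m => ?_, fun x ε hε => ?_⟩
      · by_cases h : m = m₀
        · subst h; simp [hm₀]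
        · simp [h, (upTilde_nonempty (hT m)).some_mem]
      · exact ⟨m₀, by simp [hcq, hε]⟩
    · push_neg at hq
      have hseq : ∀ m, ∃ u : ℕ → (X → ℝ), (∀ i, u i ∈ T m ∧ cq ≤ u i ∧ u i - cq ∈ Cb X) ∧
          Filter.Tendsto u Filter.atTop (nhds cq) := fun m => (hT m).2 cq (cb_const q)
      choose u hu htend using hseq
      set Fm : ℕ → Set (X → ℝ) := fun m => Set.range (fun i => u m i - cq) with hFmdef
      have hFm : ∀ m, Fm m ∈ PhiH CoverKind.gamma 0 (Cb X) := by
        intro m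
        refine ⟨?_, ⟨?_, ?_⟩, ?_⟩
        · rintro g ⟨i, rfl⟩; exact (hu m i).2.2
        · -- Fm m infinite
          intro hfin
          obtain ⟨v, hv, hfibinf⟩ := exists_infinite_fiber' (Set.infinite_univ (α := ℕ))
            (fun i => u m i - cq) (by rwa [Set.image_univ])
          have hv0 : ∀ x, u m 0 x = u m 0 x := fun _ => rfl
          have hvz : ∀ x : X, q + v x = q := by
            intro x
            have hinf2 : {i : ℕ | u m i x = q + v x}.Infinite := by
              refine hfibinf.mono fun i hi => ?_
              have := congrFun hi.2 x
              simp only [Pi.sub_apply, hcq] at this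
              simp only [Set.mem_setOf_eq]
              linarith
            have htend' : Filter.Tendsto (fun i => u m i x) Filter.atTop (nhds q) := by
              have := (tendsto_pi_nhds.1 (htend m)) x
              simpa [hcq] using this
            have hclm := mem_closure_of_frequently_of_tendsto
              ((Nat.frequently_atTop_iff_infinite.2 hinf2).mono
                (fun i hi => show (fun i => u m i x) i ∈ ({q + v x} : Set ℝ) from hi))
              htend'
            rw [closure_singleton] at hclm
            exact (Set.mem_singleton_iff.1 hclm).symm
          obtain ⟨i, hi⟩ := hfibinf.nonempty
          apply hq m
          have heq : u m i = cq := by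
            funext x
            have h1 := congrFun hi.2 x
            simp only [Pi.sub_apply, hcq] at h1 ⊢
            have h2 := hvz x
            linarith
          rw [← heq]; exact (hu m i).1
        · -- finiteness
          intro ε hε x
          have htend' : Filter.Tendsto (fun i => u m i x) Filter.atTop (nhds q) := by
            have := (tendsto_pi_nhds.1 (htend m)) x
            simpa [hcq] using this
          have hev : ∀ᶠ i in Filter.atTop, |u m i x - q| < ε := by
            have hb := htend' (Metric.ball_mem_nhds q hε)
            filter_upwards [hb] with i hi
            simpa [Real.dist_eq, Metric.mem_ball] using hi
          refine ((finite_of_eventually hev).image (fun i => u m i - cq)).subset ?_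
          rintro g ⟨⟨i, rfl⟩, hgx⟩
          refine ⟨i, ?_, rfl⟩
          have hle : ε ≤ |u m i x - q| := by
            simpa [Pi.sub_apply, hcq] using hgx
          exact not_lt.2 hle
        · rintro g ⟨i, rfl⟩
          refine ⟨fun x => ?_, by rw [sub_zero]; exact (hu m i).2.2⟩
          simpa [Pi.sub_apply, hcq] using sub_nonneg.2 ((hu m i).2.1 x)
      obtain ⟨g, hg, hrange⟩ := h3 Fm hFm
      choose idx hidx using fun m => hg m
      refine ⟨fun m => u m (idx m), fun m => (hu m (idx m)).1, fun x ε hε => ?_⟩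
      obtain ⟨gm, ⟨m, rfl⟩, hlt⟩ := propO_iff.1 hrange.2.1 x ε hε
      refine ⟨m, ?_⟩
      have := congrFun (hidx m) x
      simp only [Pi.sub_apply, hcq] at this
      rw [show u m (idx m) x - q = g m x - (0:ℝ) from by rw [← this]; ring] at *
      simpa using hlt
  | omega =>
    by_cases hq : ∃ m, cq ∈ T m
    · obtain ⟨m₀, hm₀⟩ := hq
      refine ⟨fun m => if h : m = m₀ then cq else (upTilde_nonempty (hT m)).some,
        fun m => ?_, fun x ε hε => ?_⟩
      · by_cases h : m = m₀
        · subst h; simp [hm₀]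
        · simp [h, (upTilde_nonempty (hT m)).some_mem]
      · exact ⟨m₀, by simp [hcq, hε]⟩
    · push_neg at hq
      set Tm : ℕ → Set (X → ℝ) := fun m => {g | g ∈ T m ∧ cq ≤ g ∧ g - cq ∈ Cb X} with hTmdef
      set Fm : ℕ → Set (X → ℝ) := fun m => (fun g : X → ℝ => g - cq) '' Tm m with hFmdef
      have hFm : ∀ m, Fm m ∈ PhiH CoverKind.omega 0 (Cb X) := by
        intro m
        refine ⟨?_, ⟨?_, ?_⟩, ?_⟩
        · rintro g ⟨g', hg', rfl⟩; exact hg'.2.2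
        · rintro ⟨g', hg', heq⟩
          apply hq m
          have : g' = cq := by
            funext x
            have := congrFun heq x
            simp only [Pi.sub_apply, Pi.zero_apply] at this
            linarith
          rw [← this]; exact hg'.1
        · have hcl : cq ∈ closure (Tm m) := (hT m).2 cq (cb_const q) ⟨cb_const q, le_rfl⟩
          have himg := Set.mem_image_of_mem (Homeomorph.subRight cq) hcl
          rw [Homeomorph.image_closure] at himg
          have : (Homeomorph.subRight cq) '' Tm m = Fm m := by
            ext g; simp [hFmdef]
          rw [this] at himg
          simpa using himg
        · rintro g ⟨g', hg', rfl⟩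
          refine ⟨fun x => ?_, by rw [sub_zero]; exact hg'.2.2⟩
          simpa [Pi.sub_apply] using sub_nonneg.2 (hg'.2.1 x)
      obtain ⟨g, hg, hrange⟩ := h3 Fm hFm
      choose f hfT hfeq using fun m => hg m
      refine ⟨f, fun m => (hfT m).1, fun x ε hε => ?_⟩
      obtain ⟨gm, ⟨m, rfl⟩, hlt⟩ := propO_iff.1 hrange.2.1 x ε hε
      refine ⟨m, ?_⟩
      have := congrFun (hfeq m) x
      simp only [Pi.sub_apply, hcq] at this
      rw [show f m x - q = g m x - (0:ℝ) from by rw [← this]; ring]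
      simpa using hlt

lemma imp31 [Nonempty X] {Φ : CoverKind}
    (h3 : S1 (PhiH Φ (0 : X → ℝ) (Cb X)) (PhiH CoverKind.o (0 : X → ℝ) (Cb X))) :
    S1 (upTilde Φ (Cb X)) (Pfam (Cb X)) := by
  intro T hT
  obtain ⟨e, he⟩ := exists_surjective_nat ℚ
  have key : ∀ j : ℕ, ∃ sel : ℕ → (X → ℝ), (∀ m, sel m ∈ T (Nat.pair j m)) ∧
      ∀ x : X, ∀ ε > 0, ∃ m, |sel m x - (e j : ℝ)| < ε :=
    fun j => key31 h3 (e j : ℝ) (fun m => T (Nat.pair j m)) (fun m => hT _)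
  choose s hs1 hs2 using key
  set sel : ℕ → X → ℝ := fun n => s (Nat.unpair n).1 (Nat.unpair n).2 with hseldef
  have hsel : ∀ n, sel n ∈ T n := fun n => by
    have := hs1 (Nat.unpair n).1 (Nat.unpair n).2
    rwa [Nat.pair_unpair] at this
  refine ⟨sel, hsel, ?_, ?_⟩
  · rintro g ⟨n, rfl⟩; exact upTilde_subset (hT n) (hsel n)
  · intro x
    rw [Metric.dense_iff]
    intro r ε hε
    obtain ⟨qq, hqq⟩ := exists_rat_near r (half_pos hε)
    obtain ⟨j, hj⟩ := he qq
    obtain ⟨m, hm⟩ := hs2 j x (ε/2) (half_pos hε)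
    refine ⟨sel (Nat.pair j m) x, ?_, ⟨sel (Nat.pair j m), ⟨Nat.pair j m, rfl⟩, rfl⟩⟩
    have hv : sel (Nat.pair j m) = s j m := by simp [hseldef, Nat.unpair_pair]
    rw [Metric.mem_ball, Real.dist_eq, hv, hj] at *
    rw [hj] at hm
    calc |s j m x - r| ≤ |s j m x - (qq:ℝ)| + |(qq:ℝ) - r| := abs_sub_le _ _ _
      _ < ε/2 + ε/2 := by
          have h2 : |(qq:ℝ) - r| < ε/2 := by rw [abs_sub_comm]; exact hqq
          exact add_lt_add hm h2
      _ = ε := by ring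

end Imp31
/-- For Φ ∈ {𝒪, Γ} (or Φ = Ω provided X has property (ε)) and X normal,
TFAE:
(a) C*_p(X) satisfies S₁(Φ̃↑, 𝒫);
(b) X possesses the covering property S₁(Φ^sh,𝒪);
(c) C*_p(X) satisfies S₁(Φ_0̄,𝒪_0̄);
(d) C*_p(X) satisfies S₁(Φ̃↑,𝒪_0̄). -/
theorem statement18 {X : Type*} [TopologicalSpace X] [T2Space X] [NormalSpace X]
    [Infinite X] (Φ : CoverKind)
    (hΦ : Φ = CoverKind.o ∨ Φ = CoverKind.gamma ∨ (Φ = CoverKind.omega ∧ PropEps X)) :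
    List.TFAE [
      S1 (upTilde Φ (Cb X)) (Pfam (Cb X)),
      S1 (ShFam X Φ) (OpenKindCovers X CoverKind.o),
      S1 (PhiH Φ (0 : X → ℝ) (Cb X)) (PhiH CoverKind.o (0 : X → ℝ) (Cb X)),
      S1 (upTilde Φ (Cb X)) {F | PropO (0 : X → ℝ) F}] := by
  have _inst : Nonempty X := inferInstance
  tfae_have 1 → 4 := by
    intro h1 u hu
    obtain ⟨sel, hsel, hsub, hP⟩ := h1 u hu
    refine ⟨sel, hsel, fun x => ?_⟩
    have hd := (hP x).closure_eq
    show (0 : X → ℝ) x ∈ closure ((fun f : X → ℝ => f x) '' Set.range sel)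
    have heq : ((fun f : X → ℝ => f x) '' Set.range sel)
        = {y : ℝ | ∃ f ∈ Set.range sel, f x = y} := by
      ext y
      constructor
      · rintro ⟨f, hf, rfl⟩; exact ⟨f, hf, rfl⟩
      · rintro ⟨f, hf, rfl⟩; exact ⟨f, hf, rfl⟩
    rw [heq, hd]; trivial
  tfae_have 4 → 2 := fun h4 => imp42 h4
  tfae_have 2 → 3 := fun h2 => imp23 h2
  tfae_have 3 → 1 := fun h3 => imp31 h3
  tfae_finish

end Selectors
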